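/- Let f : [0,∞) → ℝ be differentiable with f(t) > 0 for all t ≥ 0, let n be a positive integer, let k ≥ 0, χ > 0 and α ∈ ℝ. Assume that f'(t) + (α − k·f(t)ⁿ)·f(t) ≤ 0 for all t ≥ 0, and that α − k·f(0)ⁿ ≥ χ. Then f(t) ≤ f(0)·e^{−χt} for all t ≥ 0. -/
import Mathlib

open Set

/-- Exponential-decay consequence of Lemma 2.3: if `f > 0` is differentiable on `[0, ∞)`,
`f' + (α - k fⁿ) f ≤ 0` on `[0, ∞)` and `α - k f(0)ⁿ ≥ χ > 0`,
then `f(t) ≤ f(0) e^{-χ t}` for all `t ≥ 0`. -/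
theorem comparison_lemma_decay (f f' : ℝ → ℝ) (n : ℕ) (hn : 0 < n) (k χ α : ℝ)
    (hk : 0 ≤ k) (hχ : 0 < χ)
    (hderiv : ∀ t ≥ (0 : ℝ), HasDerivAt f (f' t) t)
    (hpos : ∀ t ≥ (0 : ℝ), 0 < f t)
    (hineq : ∀ t ≥ (0 : ℝ), f' t + (α - k * f t ^ n) * f t ≤ 0)
    (hinit : χ ≤ α - k * f 0 ^ n) :
    ∀ t ≥ (0 : ℝ), f t ≤ f 0 * Real.exp (-χ * t) := by
  -- Step 1: f t ≤ f 0 for all t ≥ 0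
  have hcont : ∀ b : ℝ, ContinuousOn f (Icc 0 b) := fun b =>
    fun x hx => ((hderiv x hx.1).continuousAt).continuousWithinAt
  have hle : ∀ t ≥ (0 : ℝ), f t ≤ f 0 := by
    intro t ht
    have := image_le_of_deriv_right_lt_deriv_boundary (a := 0) (b := t)
      (f := f) (f' := f') (B := fun _ => f 0) (B' := fun _ => 0)
      (hcont t)
      (fun x hx => ((hderiv x hx.1).hasDerivWithinAt))
      le_rfl (fun x => hasDerivAt_const x (f 0))
      (by
        intro x hx hfx
        have hx0 : (0:ℝ) ≤ x := hx.1
        have h1 := hineq x hx0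
        have hfp := hpos x hx0
        have : f' x ≤ -((α - k * f x ^ n) * f x) := by linarith
        have h2 : χ * f x ≤ (α - k * f x ^ n) * f x := by
          apply mul_le_mul_of_nonneg_right _ hfp.le
          rw [hfx]; exact hinit
        have : f' x ≤ -(χ * f x) := by linarith
        have : f' x < 0 := lt_of_le_of_lt this (by nlinarith)
        simpa using this)
    exact this ⟨ht, le_refl t⟩
  -- Step 2: f' t ≤ -χ * f t for t ≥ 0
  have hkey : ∀ t ≥ (0 : ℝ), f' t ≤ -χ * f t := by
    intro t ht
    have hfp := hpos t ht
    have hpow : f t ^ n ≤ f 0 ^ n := pow_le_pow_left₀ hfp.le (hle t ht) n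
    have hχ' : χ ≤ α - k * f t ^ n := by nlinarith
    have h1 := hineq t ht
    nlinarith [mul_le_mul_of_nonneg_right hχ' hfp.le]
  -- Step 3: g t = f t * exp (χ t) is bounded by f 0
  intro t ht
  set g : ℝ → ℝ := fun s => f s * Real.exp (χ * s) with hg
  have hgderiv : ∀ s ≥ (0:ℝ), HasDerivAt g (f' s * Real.exp (χ * s) + f s * (χ * Real.exp (χ * s))) s := by
    intro s hs
    exact (hderiv s hs).mul (((Real.hasDerivAt_exp (χ * s)).comp s
      ((hasDerivAt_id s).const_mul χ)).congr_deriv (by ring))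
  have hgle : g t ≤ f 0 := by
    have := image_le_of_deriv_right_le_deriv_boundary (a := 0) (b := t)
      (f := g) (f' := fun s => f' s * Real.exp (χ * s) + f s * (χ * Real.exp (χ * s)))
      (B := fun _ => f 0) (B' := fun _ => 0)
      (fun x hx => ((hgderiv x hx.1).continuousAt).continuousWithinAt)
      (fun x hx => (hgderiv x hx.1).hasDerivWithinAt)
      (by simp [hg])
      (continuousOn_const)
      (fun x _ => (hasDerivAt_const x (f 0)).hasDerivWithinAt)
      (by
        intro x hx
        have hx0 : (0:ℝ) ≤ x := hx.1
        have h1 := hkey x hx0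
        have he : (0:ℝ) < Real.exp (χ * x) := Real.exp_pos _
        show f' x * Real.exp (χ * x) + f x * (χ * Real.exp (χ * x)) ≤ (0:ℝ)
        nlinarith [mul_le_mul_of_nonneg_right h1 he.le])
    exact this ⟨ht, le_refl t⟩
  have he : (0:ℝ) < Real.exp (χ * t) := Real.exp_pos _
  have : f t * Real.exp (χ * t) ≤ f 0 := hgle
  rw [neg_mul, Real.exp_neg, ← div_eq_mul_inv, le_div_iff₀ he]
  exact this
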